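/- Let n ≥ 1 be an odd integer. Then ∫₀^{2π} sin^{n-1}τ · cos^{n-1}τ / (sin^{2n}τ + cos^{2n}τ) dτ = 2π/n. -/

import Mathlib

open Real intervalIntegral

theorem stmt_1 (n : ℕ) (hn : 1 ≤ n) (hodd : Odd n) :
    ∫ τ in (0:ℝ)..(2 * π),
        Real.sin τ ^ (n - 1) * Real.cos τ ^ (n - 1) /
          (Real.sin τ ^ (2 * n) + Real.cos τ ^ (2 * n)) = 2 * π / n := by
  obtain ⟨m, hm⟩ := hodd
  subst hm
  set f : ℝ → ℝ := fun τ =>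
    Real.sin τ ^ (2 * m + 1 - 1) * Real.cos τ ^ (2 * m + 1 - 1) /
      (Real.sin τ ^ (2 * (2 * m + 1)) + Real.cos τ ^ (2 * (2 * m + 1))) with hf
  have hexp : 2 * m + 1 - 1 = 2 * m := rfl
  have hden : ∀ τ : ℝ, 0 < Real.sin τ ^ (2 * (2 * m + 1)) + Real.cos τ ^ (2 * (2 * m + 1)) := by
    intro τ
    rcases eq_or_ne (Real.sin τ) 0 with h | h
    · have hc : Real.cos τ ^ 2 = 1 := by
        have := Real.sin_sq_add_cos_sq τ
        rw [h] at this; simpa using this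
      have h1 : Real.cos τ ^ (2 * (2 * m + 1)) = 1 := by
        rw [pow_mul, hc, one_pow]
      have h2 : 0 ≤ Real.sin τ ^ (2 * (2 * m + 1)) := by rw [pow_mul]; positivity
      linarith
    · have h1 : 0 < Real.sin τ ^ (2 * (2 * m + 1)) := by
        rw [pow_mul]; positivity
      have h2 : 0 ≤ Real.cos τ ^ (2 * (2 * m + 1)) := by rw [pow_mul]; positivity
      linarith
  have hcont : Continuous f := by
    apply Continuous.div
    · fun_prop
    · fun_prop
    · intro τ; exact (hden τ).ne'
  have hper : Function.Periodic f (π / 2) := by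
    intro τ
    simp only [hf]
    rw [Real.sin_add_pi_div_two, Real.cos_add_pi_div_two]
    have h1 : (-Real.sin τ) ^ (2 * m + 1 - 1) = Real.sin τ ^ (2 * m + 1 - 1) := by
      rw [hexp]; exact (Even.neg_pow (even_two_mul m) _)
    have h2 : (-Real.sin τ) ^ (2 * (2 * m + 1)) = Real.sin τ ^ (2 * (2 * m + 1)) := by
      exact (Even.neg_pow (even_two_mul _) _)
    rw [h1, h2]
    ring_nf
  -- FTC on [-π/4, π/4]
  have hn0 : ((2 * m + 1 : ℕ) : ℝ) ≠ 0 := by positivity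
  have hderiv : ∀ τ ∈ Set.uIcc (-(π/4)) (π/4),
      HasDerivAt (fun x => (1 / (2 * m + 1 : ℝ)) * Real.arctan (Real.tan x ^ (2 * m + 1)))
        (f τ) τ := by
    intro τ hτ
    have hτ' : τ ∈ Set.Icc (-(π/4)) (π/4) := by
      rwa [Set.uIcc_of_le (by linarith [pi_pos])] at hτ
    have hcos : 0 < Real.cos τ := by
      apply Real.cos_pos_of_mem_Ioo
      constructor
      · linarith [hτ'.1, pi_pos]
      · linarith [hτ'.2, pi_pos]
    have h1 : HasDerivAt Real.tan (1 / Real.cos τ ^ 2) τ := Real.hasDerivAt_tan hcos.ne'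
    have h2 : HasDerivAt (fun x => Real.tan x ^ (2 * m + 1))
        ((2 * m + 1 : ℕ) * Real.tan τ ^ (2 * m + 1 - 1) * (1 / Real.cos τ ^ 2)) τ :=
      h1.pow _
    have h3 : HasDerivAt Real.arctan (1 / (1 + (Real.tan τ ^ (2 * m + 1)) ^ 2))
        (Real.tan τ ^ (2 * m + 1)) := Real.hasDerivAt_arctan _
    have h4 := (h3.comp τ h2).const_mul (1 / (2 * m + 1 : ℝ))
    convert h4 using 1
    case e'_4 => rfl
    case e'_5 => rfl
    case e'_8 => rfl
    have hpos : (0:ℝ) < 1 + (Real.tan τ ^ (2 * m + 1)) ^ 2 := by positivity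
    rw [hf, Real.tan_eq_sin_div_cos, hexp]
    simp only [Function.comp]
    have hsc := Real.sin_sq_add_cos_sq τ
    have hd := hden τ
    have hb : 0 < Real.cos τ ^ (2*m) := by positivity
    have e1 : ((Real.sin τ / Real.cos τ)^(2*m+1))^2 = (Real.sin τ^(2*m))^2*Real.sin τ^2 / ((Real.cos τ^(2*m))^2*Real.cos τ^2) := by rw [div_pow, div_pow]; ring
    have e2 : (Real.sin τ / Real.cos τ)^(2*m) = Real.sin τ^(2*m)/Real.cos τ^(2*m) := div_pow _ _ _
    have e3 : Real.sin τ^(2*(2*m+1)) = (Real.sin τ^(2*m))^2*Real.sin τ^2 := by ring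
    have e4 : Real.cos τ^(2*(2*m+1)) = (Real.cos τ^(2*m))^2*Real.cos τ^2 := by ring
    rw [e1, e2, e3, e4]
    rw [e3, e4] at hd
    push_cast
    generalize Real.sin τ ^ (2*m) = a at *
    generalize Real.cos τ ^ (2*m) = b at *
    have hm : (0:ℝ) < 2 * m + 1 := by positivity
    field_simp
    ring
  have hFTC : ∫ x in (-(π/4))..(π/4), f x = π / (2 * (2 * m + 1)) := by
    rw [intervalIntegral.integral_eq_sub_of_hasDerivAt hderiv (hcont.intervalIntegrable _ _)]
    have ht : Real.tan (-(π/4)) = -1 := by rw [Real.tan_neg, Real.tan_pi_div_four]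
    rw [Real.tan_pi_div_four, ht, one_pow]
    have hneg : (-1:ℝ) ^ (2 * m + 1) = -1 := Odd.neg_one_pow ⟨m, rfl⟩
    rw [hneg, Real.arctan_one]
    rw [show Real.arctan (-1) = -(π/4) by rw [Real.arctan_neg, Real.arctan_one]]
    have : (0:ℝ) < 2 * (m:ℝ) + 1 := by positivity
    field_simp
    ring
  have hint : ∀ a b : ℝ, IntervalIntegrable f MeasureTheory.volume a b :=
    fun a b => hcont.intervalIntegrable a b
  have key : ∀ t : ℝ, ∫ x in t..(t + π/2), f x = π / (2 * (2 * m + 1)) := by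
    intro t
    rw [hper.intervalIntegral_add_eq t (-(π/4)), show -(π/4) + π/2 = π/4 by ring, hFTC]
  have e1 : ∫ x in (0:ℝ)..(π/2), f x = π / (2 * (2 * m + 1)) := by
    have := key 0; rwa [zero_add] at this
  have e2 : ∫ x in (π/2)..π, f x = π / (2 * (2 * m + 1)) := by
    have := key (π/2); rwa [show π/2 + π/2 = π by ring] at this
  have e3 : ∫ x in π..(3*π/2), f x = π / (2 * (2 * m + 1)) := by
    have := key π; rwa [show π + π/2 = 3*π/2 by ring] at this
  have e4 : ∫ x in (3*π/2)..(2*π), f x = π / (2 * (2 * m + 1)) := by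
    have := key (3*π/2); rwa [show 3*π/2 + π/2 = 2*π by ring] at this
  have a1 := integral_add_adjacent_intervals (hint 0 (π/2)) (hint (π/2) π)
  have a2 := integral_add_adjacent_intervals (hint 0 π) (hint π (3*π/2))
  have a3 := integral_add_adjacent_intervals (hint 0 (3*π/2)) (hint (3*π/2) (2*π))
  have hfin : ∫ x in (0:ℝ)..(2*π), f x = 4 * (π / (2 * (2 * m + 1))) := by
    rw [← a3, ← a2, ← a1, e1, e2, e3, e4]; ring
  rw [hfin]
  have : (0:ℝ) < 2 * (m:ℝ) + 1 := by positivity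
  push_cast
  field_simp
  ring
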